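/- Let φ_a, φ_b : [0,1] → ℝ be continuous piecewise-affine functions, each constant on [u₂, 1] for some u₂ < 1, such that φ_a(0) = φ_b(0) = 0, φ_a(u) ≥ φ_b(u) for all u ∈ [0,1], and φ_a = φ_b on [u₁, 1] for some u₁ < 1. Then τ(φ_a) ≤ τ(φ_b). -/

import Mathlib

open MeasureTheory Set

/-- `f : ℝ → ℝ` is *continuous piecewise affine* on `[0,1]`: it is continuous on `[0,1]`
and there is a finite partition `0 = t₀ < t₁ < ⋯ < t_m = 1` such that `f` is affine on
each subinterval `[t_{j}, t_{j+1}]`. -/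
def CtsPiecewiseAffine (f : ℝ → ℝ) : Prop :=
  ContinuousOn f (Set.Icc (0:ℝ) 1) ∧
  ∃ (m : ℕ) (t : ℕ → ℝ), 0 < m ∧ t 0 = 0 ∧ t m = 1 ∧
    (∀ j < m, t j < t (j+1)) ∧
    (∀ j < m, ∃ a b : ℝ, ∀ x ∈ Set.Icc (t j) (t (j+1)), f x = a * x + b)

/-- The *twist* of an edgepath-system function `f`:
`τ(f) = ∫₀¹ (2/(1−u)²)·f′(u) du`. -/
noncomputable def twist (f : ℝ → ℝ) : ℝ :=
  ∫ u in (0:ℝ)..1, (2/(1-u)^2) * deriv f u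

/-- (Claim in the proof of Lemma 3.3.) If `φ_a` and `φ_b` are continuous piecewise-affine
functions on `[0,1]`, each constant on `[u₂,1]` for some `u₂ < 1`, with
`φ_a 0 = φ_b 0 = 0`, `φ_a ≥ φ_b` on `[0,1]`, and `φ_a = φ_b` on `[u₁,1]` for some
`u₁ < 1`, then `τ(φ_a) ≤ τ(φ_b)`. -/

lemma hasDerivAt_H (a b x : ℝ) (hx : x ≠ 1) :
    HasDerivAt (fun u => 2/(1-u)^2 * (a*u+b))
      (4/(1-x)^3 * (a*x+b) + 2/(1-x)^2 * a) x := by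
  have hne : (1 : ℝ) - x ≠ 0 := sub_ne_zero.mpr (Ne.symm hx)
  have h0 : HasDerivAt (fun u : ℝ => 1 - u) (-1) x := (hasDerivAt_id x).const_sub 1
  have h1 : HasDerivAt (fun u : ℝ => (1-u)^2) (2*(1-x)^1*(-1)) x := by
    simpa using h0.fun_pow 2
  have h2 : HasDerivAt (fun u : ℝ => 2/(1-u)^2)
      ((0*(1-x)^2 - 2*(2*(1-x)^1*(-1)))/((1-x)^2)^2) x :=
    (hasDerivAt_const x 2).div h1 (pow_ne_zero 2 hne)
  have h3 : HasDerivAt (fun u : ℝ => a*u+b) a x := by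
    simpa using ((hasDerivAt_id x).const_mul a).add_const b
  have := h2.fun_mul h3
  refine this.congr_deriv ?_
  field_simp
  ring

lemma ae_ne_point (q : ℝ) : ∀ᵐ x : ℝ, x ≠ q := by
  have : (volume : Measure ℝ) {q} = 0 := measure_singleton q
  rw [ae_iff]
  simpa using this

lemma cont_w {s : Set ℝ} (hs : ∀ x ∈ s, x ≠ 1) :
    ContinuousOn (fun u : ℝ => 2/(1-u)^2) s := by
  apply ContinuousOn.div continuousOn_const (by fun_prop)
  intro x hx
  exact pow_ne_zero 2 (sub_ne_zero.mpr (Ne.symm (hs x hx)))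

lemma cont_v {s : Set ℝ} (hs : ∀ x ∈ s, x ≠ 1) :
    ContinuousOn (fun u : ℝ => 4/(1-u)^3) s := by
  apply ContinuousOn.div continuousOn_const (by fun_prop)
  intro x hx
  exact pow_ne_zero 3 (sub_ne_zero.mpr (Ne.symm (hs x hx)))

/-- Main single-piece computation. -/
lemma piece_int (f : ℝ → ℝ) (p q a b : ℝ) (hpq : p ≤ q) (hq1 : q < 1)
    (haff : ∀ x ∈ Set.Icc p q, f x = a*x+b)
    (hder : ∀ x ∈ Set.Ioo p q, deriv f x = a) :
    IntervalIntegrable (fun u => 2/(1-u)^2 * deriv f u) volume p q ∧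
    ∫ u in p..q, 2/(1-u)^2 * deriv f u
      = 2/(1-q)^2 * f q - 2/(1-p)^2 * f p - ∫ u in p..q, 4/(1-u)^3 * f u := by
  have hne1 : ∀ x ∈ Set.uIcc p q, x ≠ 1 := by
    intro x hx
    rw [Set.uIcc_of_le hpq] at hx
    exact ne_of_lt (lt_of_le_of_lt hx.2 hq1)
  -- a.e. equality of integrands on uIoc
  have hae : ∀ᵐ x : ℝ, x ∈ Set.uIoc p q → 2/(1-x)^2 * deriv f x = 2/(1-x)^2 * a := by
    filter_upwards [ae_ne_point q] with x hx hx2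
    rw [Set.uIoc_of_le hpq] at hx2
    rw [hder x ⟨hx2.1, lt_of_le_of_ne hx2.2 hx⟩]
  have hwa : IntervalIntegrable (fun u : ℝ => 2/(1-u)^2 * a) volume p q :=
    ((cont_w hne1).mul continuousOn_const).intervalIntegrable
  have hint : IntervalIntegrable (fun u => 2/(1-u)^2 * deriv f u) volume p q := by
    rw [intervalIntegrable_iff] at hwa ⊢
    refine hwa.congr_fun_ae ?_
    have : ∀ᵐ x ∂(volume.restrict (Set.uIoc p q)),
        (fun u : ℝ => 2/(1-u)^2 * a) x = (fun u : ℝ => 2/(1-u)^2 * deriv f u) x := by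
      rw [ae_restrict_iff' measurableSet_uIoc]
      filter_upwards [hae] with x hx hx2
      exact (hx hx2).symm
    exact this
  refine ⟨hint, ?_⟩
  have e1 : ∫ u in p..q, 2/(1-u)^2 * deriv f u = ∫ u in p..q, 2/(1-u)^2 * a :=
    intervalIntegral.integral_congr_ae hae
  have key : ∫ u in p..q, (4/(1-u)^3 * (a*u+b) + 2/(1-u)^2 * a)
      = 2/(1-q)^2*(a*q+b) - 2/(1-p)^2*(a*p+b) := by
    apply intervalIntegral.integral_eq_sub_of_hasDerivAt
    · exact fun x hx => hasDerivAt_H a b x (hne1 x hx)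
    · exact (((cont_v hne1).mul (by fun_prop)).add
        ((cont_w hne1).mul continuousOn_const)).intervalIntegrable
  have hv : IntervalIntegrable (fun u : ℝ => 4/(1-u)^3 * (a*u+b)) volume p q :=
    ((cont_v hne1).mul (by fun_prop)).intervalIntegrable
  have hsplit : ∫ u in p..q, (4/(1-u)^3 * (a*u+b) + 2/(1-u)^2 * a)
      = (∫ u in p..q, 4/(1-u)^3 * (a*u+b)) + ∫ u in p..q, 2/(1-u)^2 * a :=
    intervalIntegral.integral_add hv hwa
  have e2 : ∫ u in p..q, 4/(1-u)^3 * f u = ∫ u in p..q, 4/(1-u)^3 * (a*u+b) := by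
    apply intervalIntegral.integral_congr
    intro x hx
    rw [Set.uIcc_of_le hpq] at hx
    simp only [haff x hx]
  have hfp : f p = a*p+b := haff p ⟨le_refl p, hpq⟩
  have hfq : f q = a*q+b := haff q ⟨hpq, le_refl q⟩
  rw [e1, e2, hfp, hfq]
  linarith [key, hsplit]

lemma twist_eq (f : ℝ → ℝ) (hf : CtsPiecewiseAffine f) (c : ℝ) (hc0 : 0 ≤ c) (hc1 : c < 1)
    (hconst : ∀ u ∈ Set.Icc c 1, f u = f c) :
    twist f = 2/(1-c)^2 * f c - 2 * f 0 - ∫ u in (0:ℝ)..c, 4/(1-u)^3 * f u := by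
  obtain ⟨hcont, m, t, hm, ht0, htm, hlt, haff⟩ := hf
  set s : ℕ → ℝ := fun j => min (t j) c with hs
  have hs0 : s 0 = 0 := by simp [hs, ht0, hc0]
  have hsm : s m = c := by simp [hs, htm, le_of_lt hc1]
  have tnn : ∀ j, j ≤ m → 0 ≤ t j := by
    intro j hj
    induction j with
    | zero => simp [ht0]
    | succ k ih =>
      exact le_of_lt (lt_of_le_of_lt (ih (by omega)) (hlt k (by omega)))
  have hsmono : ∀ j, s j ≤ s (j+1) ∨ True := fun _ => Or.inr trivial
  have hsle : ∀ j < m, s j ≤ s (j+1) := by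
    intro j hj
    exact min_le_min (le_of_lt (hlt j hj)) (le_refl c)
  have hsc : ∀ j, s j ≤ c := fun j => min_le_right _ _
  have hsnn : ∀ j, j ≤ m → 0 ≤ s j := fun j hj => le_min (tnn j hj) hc0
  -- per-piece facts
  have hpiece : ∀ j < m,
      IntervalIntegrable (fun u => 2/(1-u)^2 * deriv f u) volume (s j) (s (j+1)) ∧
      ∫ u in s j..s (j+1), 2/(1-u)^2 * deriv f u
        = 2/(1-(s (j+1)))^2 * f (s (j+1)) - 2/(1-(s j))^2 * f (s j)
          - ∫ u in s j..s (j+1), 4/(1-u)^3 * f u := by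
    intro j hj
    rcases eq_or_lt_of_le (hsle j hj) with heq | hlt'
    · constructor
      · rw [← heq]
      · rw [← heq]
        simp
    · -- s j < s (j+1) implies t j < c
      have htjc : t j < c := by
        by_contra h
        push_neg at h
        have h1 : s j = c := min_eq_right h
        have h2 : s (j+1) ≤ c := hsc _
        rw [h1] at hlt'
        linarith
      have hpj : s j = t j := min_eq_left (le_of_lt htjc)
      have hq1 : s (j+1) < 1 := lt_of_le_of_lt (hsc _) hc1
      have hsub : Set.Icc (s j) (s (j+1)) ⊆ Set.Icc (t j) (t (j+1)) := by
        apply Set.Icc_subset_Icc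
        · rw [hpj]
        · exact min_le_left _ _
      obtain ⟨a, b, hab⟩ := haff j hj
      apply piece_int f (s j) (s (j+1)) a b (le_of_lt hlt') hq1
      · exact fun x hx => hab x (hsub hx)
      · intro x hx
        have hxo : x ∈ Set.Ioo (t j) (t (j+1)) := by
          constructor
          · rw [← hpj]; exact hx.1
          · exact lt_of_lt_of_le hx.2 (min_le_left _ _)
        have hmem : Set.Ioo (t j) (t (j+1)) ∈ nhds x := Ioo_mem_nhds hxo.1 hxo.2
        have hev : f =ᶠ[nhds x] fun y => a*y+b :=
          Filter.eventually_of_mem hmem (fun y hy => hab y (Set.Ioo_subset_Icc_self hy))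
        rw [hev.deriv_eq]
        have : HasDerivAt (fun y : ℝ => a*y+b) a x := by
          simpa using ((hasDerivAt_id x).const_mul a).add_const b
        exact this.deriv
  -- integrability of v * f on pieces
  have hne01 : ∀ x ∈ Set.Icc (0:ℝ) c, x ≠ 1 := fun x hx => ne_of_lt (lt_of_le_of_lt hx.2 hc1)
  have hvf_cont : ContinuousOn (fun u : ℝ => 4/(1-u)^3 * f u) (Set.Icc 0 c) :=
    (cont_v hne01).mul (hcont.mono (Set.Icc_subset_Icc le_rfl (le_of_lt hc1)))
  have hsub_piece : ∀ j < m, Set.uIcc (s j) (s (j+1)) ⊆ Set.Icc (0:ℝ) c := by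
    intro j hj
    rw [Set.uIcc_of_le (hsle j hj)]
    exact Set.Icc_subset_Icc (hsnn j (by omega)) (hsc _)
  have hvf_int : ∀ j < m, IntervalIntegrable (fun u : ℝ => 4/(1-u)^3 * f u) volume (s j) (s (j+1)) :=
    fun j hj => (hvf_cont.mono (hsub_piece j hj)).intervalIntegrable
  -- sum over pieces
  have hsum1 : ∑ j ∈ Finset.range m, ∫ u in s j..s (j+1), 2/(1-u)^2 * deriv f u
      = ∫ u in (s 0)..(s m), 2/(1-u)^2 * deriv f u :=
    intervalIntegral.sum_integral_adjacent_intervals (fun j hj => (hpiece j hj).1)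
  have hsum2 : ∑ j ∈ Finset.range m, ∫ u in s j..s (j+1), 4/(1-u)^3 * f u
      = ∫ u in (s 0)..(s m), 4/(1-u)^3 * f u :=
    intervalIntegral.sum_integral_adjacent_intervals hvf_int
  have htel : ∑ j ∈ Finset.range m, (2/(1-(s (j+1)))^2 * f (s (j+1)) - 2/(1-(s j))^2 * f (s j))
      = 2/(1-(s m))^2 * f (s m) - 2/(1-(s 0))^2 * f (s 0) :=
    Finset.sum_range_sub (fun j => 2/(1-(s j))^2 * f (s j)) m
  have hmain : ∫ u in (0:ℝ)..c, 2/(1-u)^2 * deriv f u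
      = 2/(1-c)^2 * f c - 2 * f 0 - ∫ u in (0:ℝ)..c, 4/(1-u)^3 * f u := by
    have : ∑ j ∈ Finset.range m, ∫ u in s j..s (j+1), 2/(1-u)^2 * deriv f u
        = ∑ j ∈ Finset.range m, ((2/(1-(s (j+1)))^2 * f (s (j+1)) - 2/(1-(s j))^2 * f (s j))
            - ∫ u in s j..s (j+1), 4/(1-u)^3 * f u) := by
      apply Finset.sum_congr rfl
      intro j hj
      rw [(hpiece j (Finset.mem_range.mp hj)).2]
    rw [Finset.sum_sub_distrib, htel, hsum2] at this
    rw [hsum1] at this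
    rw [hs0, hsm] at this
    rw [this]
    norm_num
  have hzero : ∀ x ∈ Set.uIoc c (1:ℝ), 2/(1-x)^2 * deriv f x = 0 := by
    intro x hx
    rw [Set.uIoc_of_le (le_of_lt hc1)] at hx
    rcases eq_or_lt_of_le hx.2 with h1 | h1
    · rw [h1]
      norm_num
    · have hmem : Set.Ioo c 1 ∈ nhds x := Ioo_mem_nhds hx.1 h1
      have hev : f =ᶠ[nhds x] fun _ => f c :=
        Filter.eventually_of_mem hmem (fun y hy => hconst y ⟨le_of_lt hy.1, le_of_lt hy.2⟩)
      rw [hev.deriv_eq, deriv_const]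
      ring
  have hint2 : IntervalIntegrable (fun u => 2/(1-u)^2 * deriv f u) volume c 1 := by
    rw [intervalIntegrable_iff]
    exact (integrableOn_congr_fun (fun x hx => hzero x hx) measurableSet_uIoc).mpr
      (integrableOn_zero)
  have hz : ∫ u in c..(1:ℝ), 2/(1-u)^2 * deriv f u = 0 := by
    have := intervalIntegral.integral_congr_ae (μ := volume) (a := c) (b := (1:ℝ))
      (f := fun u => 2/(1-u)^2 * deriv f u) (g := fun _ => (0:ℝ)) (ae_of_all _ hzero)
    simpa using this
  have hint1 : IntervalIntegrable (fun u => 2/(1-u)^2 * deriv f u) volume 0 c := by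
    have := IntervalIntegrable.trans_iterate (a := s) (μ := volume) (n := m)
      (fun k hk => (hpiece k hk).1)
    rwa [hs0, hsm] at this
  have hfin : twist f = (∫ u in (0:ℝ)..c, 2/(1-u)^2 * deriv f u)
      + ∫ u in c..(1:ℝ), 2/(1-u)^2 * deriv f u :=
    (intervalIntegral.integral_add_adjacent_intervals hint1 hint2).symm
  rw [hfin, hz, hmain]
  ring

theorem stmt1 (φa φb : ℝ → ℝ)
    (hφa : CtsPiecewiseAffine φa) (hφb : CtsPiecewiseAffine φb)
    (u₂ : ℝ) (hu₂ : u₂ < 1)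
    (hca : ∃ c : ℝ, ∀ u ∈ Set.Icc u₂ (1:ℝ), φa u = c)
    (hcb : ∃ c : ℝ, ∀ u ∈ Set.Icc u₂ (1:ℝ), φb u = c)
    (ha0 : φa 0 = 0) (hb0 : φb 0 = 0)
    (hge : ∀ u ∈ Set.Icc (0:ℝ) 1, φb u ≤ φa u)
    (u₁ : ℝ) (hu₁ : u₁ < 1)
    (heq : ∀ u ∈ Set.Icc u₁ (1:ℝ), φa u = φb u) :
    twist φa ≤ twist φb := by
  set c : ℝ := max u₂ (max u₁ 0) with hc
  have hc0 : 0 ≤ c := le_max_of_le_right (le_max_right _ _)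
  have hc1 : c < 1 := by
    apply max_lt hu₂ (max_lt hu₁ one_pos)
  have hcu2 : u₂ ≤ c := le_max_left _ _
  have hcu1 : u₁ ≤ c := le_max_of_le_right (le_max_left _ _)
  have hconsta : ∀ u ∈ Set.Icc c 1, φa u = φa c := by
    obtain ⟨k, hk⟩ := hca
    intro u hu
    rw [hk u ⟨le_trans hcu2 hu.1, hu.2⟩, hk c ⟨hcu2, le_of_lt hc1⟩]
  have hconstb : ∀ u ∈ Set.Icc c 1, φb u = φb c := by
    obtain ⟨k, hk⟩ := hcb
    intro u hu
    rw [hk u ⟨le_trans hcu2 hu.1, hu.2⟩, hk c ⟨hcu2, le_of_lt hc1⟩]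
  have hta := twist_eq φa hφa c hc0 hc1 hconsta
  have htb := twist_eq φb hφb c hc0 hc1 hconstb
  have hcc : φa c = φb c := heq c ⟨hcu1, le_of_lt hc1⟩
  have hne01 : ∀ x ∈ Set.Icc (0:ℝ) c, x ≠ 1 := fun x hx => ne_of_lt (lt_of_le_of_lt hx.2 hc1)
  have hIa : IntervalIntegrable (fun u : ℝ => 4/(1-u)^3 * φa u) volume 0 c := by
    apply ContinuousOn.intervalIntegrable
    rw [Set.uIcc_of_le hc0]
    exact (cont_v hne01).mul (hφa.1.mono (Set.Icc_subset_Icc le_rfl (le_of_lt hc1)))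
  have hIb : IntervalIntegrable (fun u : ℝ => 4/(1-u)^3 * φb u) volume 0 c := by
    apply ContinuousOn.intervalIntegrable
    rw [Set.uIcc_of_le hc0]
    exact (cont_v hne01).mul (hφb.1.mono (Set.Icc_subset_Icc le_rfl (le_of_lt hc1)))
  have hmono : (∫ u in (0:ℝ)..c, 4/(1-u)^3 * φb u) ≤ ∫ u in (0:ℝ)..c, 4/(1-u)^3 * φa u := by
    apply intervalIntegral.integral_mono_on hc0 hIb hIa
    intro x hx
    have hx1 : (1:ℝ) - x > 0 := by
      have := lt_of_le_of_lt hx.2 hc1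
      linarith
    have hvpos : (0:ℝ) ≤ 4/(1-x)^3 := by positivity
    exact mul_le_mul_of_nonneg_left
      (hge x ⟨hx.1, le_trans hx.2 (le_of_lt hc1)⟩) hvpos
  rw [hta, htb, hcc, ha0, hb0]
  linarith
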